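/- Fix a field F and let K be the class of all F-vector spaces. For all F-vector spaces V and W: dis(V,W) = 0 if V ≅ W; dis(V,W) = |dim(V) − dim(W)| if V and W are both finite-dimensional; and dis(V,W) = ∞ otherwise (i.e., if V ≇ W and not both are finite-dimensional). -/

import Mathlib

namespace VecNetwork

variable (F : Type) [Field F]

/-- `V` is largely embeddable into `W` in the class of all `F`-vector spaces: `W` has a
subspace `U` isomorphic to `V` such that `U` together with one extra vector spans `W`. -/
def LargeEmb (V W : ModuleCat.{0} F) : Prop :=
  ∃ U : Submodule F W, Nonempty (V ≃ₗ[F] U) ∧ ∃ w : W, Submodule.span F (↑U ∪ {w}) = ⊤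

/-- A path of length `n` between `V` and `W` in the network of large embeddings of the
class of all `F`-vector spaces. -/
def HasPath (V W : ModuleCat.{0} F) (n : ℕ) : Prop :=
  ∃ C : ℕ → ModuleCat.{0} F, Nonempty ((C 0) ≃ₗ[F] V) ∧ Nonempty ((C n) ≃ₗ[F] W) ∧
    ∀ i < n, LargeEmb F (C i) (C (i + 1)) ∨ LargeEmb F (C (i + 1)) (C i)

/-- The generator distance in the class of all `F`-vector spaces, in `ℕ ∪ {∞}`. -/
noncomputable def dis (V W : ModuleCat.{0} F) : ℕ∞ :=
  sInf {q : ℕ∞ | ∃ n : ℕ, q = (n : ℕ∞) ∧ HasPath F V W n}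


open Module Cardinal in
lemma largeEmb_rank {V W : ModuleCat.{0} F} (h : LargeEmb F V W) :
    Module.rank F V ≤ Module.rank F W ∧ Module.rank F W ≤ Module.rank F V + 1 := by
  obtain ⟨U, ⟨e⟩, w, hw⟩ := h
  have hUV : Module.rank F V = Module.rank F U := e.rank_eq
  constructor
  · rw [hUV]; exact U.rank_le
  · have h2 : Module.rank F W = Module.rank F (U ⊔ Submodule.span F {w} : Submodule F W) := by
      have h3 : (⊤ : Submodule F W) = U ⊔ Submodule.span F {w} := by
        rw [← hw, Submodule.span_union, Submodule.span_eq]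
      rw [← rank_top F W, h3]
    rw [h2, hUV]
    refine (Submodule.rank_add_le_rank_add_rank _ _).trans ?_
    gcongr
    refine (rank_span_le _).trans ?_
    simp

open Module Cardinal

lemma largeEmb_fin_iff {V W : ModuleCat.{0} F} (h : LargeEmb F V W) :
    FiniteDimensional F V ↔ FiniteDimensional F W := by
  obtain ⟨h1, h2⟩ := largeEmb_rank F h
  rw [show (FiniteDimensional F V) = Module.Finite F V from rfl,
    show (FiniteDimensional F W) = Module.Finite F W from rfl,
    ← Module.rank_lt_aleph0_iff, ← Module.rank_lt_aleph0_iff]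
  constructor
  · intro hV
    exact h2.trans_lt (Cardinal.add_lt_aleph0 hV Cardinal.one_lt_aleph0)
  · intro hW
    exact h1.trans_lt hW



lemma largeEmb_finrank {V W : ModuleCat.{0} F} (h : LargeEmb F V W)
    (hV : FiniteDimensional F V) (hW : FiniteDimensional F W) :
    finrank F V ≤ finrank F W ∧ finrank F W ≤ finrank F V + 1 := by
  obtain ⟨h1, h2⟩ := largeEmb_rank F h
  rw [← finrank_eq_rank, ← finrank_eq_rank] at h1 h2
  constructor
  · exact_mod_cast h1
  · have : (finrank F W : Cardinal) ≤ ((finrank F V + 1 : ℕ) : Cardinal) := by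
      push_cast; exact h2
    exact_mod_cast this

lemma largeEmb_succ {V W : ModuleCat.{0} F} (hV : FiniteDimensional F V)
    (hW : FiniteDimensional F W) (h : finrank F W = finrank F V + 1) : LargeEmb F V W := by
  classical
  have hle : finrank F V ≤ finrank F W := by omega
  set b := Module.finBasis F W with hb
  set U : Submodule F W := Submodule.span F (Set.range (b ∘ Fin.castLE hle)) with hUdef
  have hli : LinearIndependent F (b ∘ Fin.castLE hle) :=
    b.linearIndependent.comp _ (Fin.castLE_injective _)
  have hU : finrank F U = finrank F V := by
    rw [hUdef, finrank_span_eq_card hli]; simp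
  have hUne : U ≠ ⊤ := by
    intro ht
    rw [ht, finrank_top] at hU
    omega
  obtain ⟨w, -, hwU⟩ := SetLike.exists_of_lt (show U < ⊤ from lt_top_iff_ne_top.mpr hUne)
  refine ⟨U, FiniteDimensional.nonempty_linearEquiv_of_finrank_eq hU.symm, w, ?_⟩
  rw [Submodule.span_union, Submodule.span_eq]
  have hlt : U < U ⊔ Submodule.span F {w} :=
    lt_of_le_of_ne le_sup_left (fun he => by
      have hm : w ∈ U ⊔ Submodule.span F {w} :=
        Submodule.mem_sup_right (Submodule.mem_span_singleton_self w)
      rw [← he] at hm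
      exact hwU hm)
  have h1 : finrank F U < finrank F (U ⊔ Submodule.span F {w} : Submodule F W) :=
    Submodule.finrank_lt_finrank_of_lt hlt
  have h2 : finrank F (U ⊔ Submodule.span F {w} : Submodule F W) ≤ finrank F W :=
    Submodule.finrank_le _
  exact Submodule.eq_top_of_finrank_eq (by omega)

lemma hasPath_symm {V W : ModuleCat.{0} F} {n : ℕ} (h : HasPath F V W n) :
    HasPath F W V n := by
  obtain ⟨C, ⟨e0⟩, ⟨en⟩, hstep⟩ := h
  refine ⟨fun i => C (n - i), ⟨by show ↥(C (n - 0)) ≃ₗ[F] ↥W; rw [Nat.sub_zero]; exact en⟩,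
    ⟨by show ↥(C (n - n)) ≃ₗ[F] ↥V; rw [Nat.sub_self]; exact e0⟩, ?_⟩
  intro i hi
  have h1 : n - i = (n - (i + 1)) + 1 := by omega
  show LargeEmb F (C (n - i)) (C (n - (i + 1))) ∨ LargeEmb F (C (n - (i + 1))) (C (n - i))
  rw [h1]
  exact (hstep (n - (i + 1)) (by omega)).symm

lemma hasPath_of_le {V W : ModuleCat.{0} F} (hV : FiniteDimensional F V)
    (hW : FiniteDimensional F W) (h : finrank F V ≤ finrank F W) :
    HasPath F V W (finrank F W - finrank F V) := by
  haveI := hV; haveI := hW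
  set a := finrank F V with ha
  set n := finrank F W - finrank F V with hn
  have hfr : ∀ k : ℕ, finrank F (ModuleCat.of F (Fin k → F)) = k := fun k =>
    Module.finrank_fin_fun F
  have hfin : ∀ k : ℕ, FiniteDimensional F (ModuleCat.of F (Fin k → F)) := fun k =>
    inferInstanceAs (FiniteDimensional F (Fin k → F))
  refine ⟨fun i => ModuleCat.of F (Fin (a + min i n) → F), ?_, ?_, ?_⟩
  · show Nonempty (ModuleCat.of F (Fin (a + min 0 n) → F) ≃ₗ[F] V)
    haveI := hfin (a + min 0 n)
    exact FiniteDimensional.nonempty_linearEquiv_of_finrank_eq (by rw [hfr]; simp; exact ha)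
  · show Nonempty (ModuleCat.of F (Fin (a + min n n) → F) ≃ₗ[F] W)
    haveI := hfin (a + min n n)
    exact FiniteDimensional.nonempty_linearEquiv_of_finrank_eq (by rw [hfr]; simp; omega)
  · intro i hi
    show LargeEmb F (ModuleCat.of F (Fin (a + min i n) → F))
        (ModuleCat.of F (Fin (a + min (i + 1) n) → F)) ∨
      LargeEmb F (ModuleCat.of F (Fin (a + min (i + 1) n) → F))
        (ModuleCat.of F (Fin (a + min i n) → F))
    have h1 : min i n = i := by omega
    have h2 : min (i + 1) n = i + 1 := by omega
    rw [h1, h2]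
    exact Or.inl (largeEmb_succ F (hfin _) (hfin _) (by rw [hfr, hfr]; omega))

lemma edge_fin {X Y : ModuleCat.{0} F} (h : LargeEmb F X Y ∨ LargeEmb F Y X)
    (hX : FiniteDimensional F X) :
    FiniteDimensional F Y ∧ ((finrank F X : ℤ) - finrank F Y).natAbs ≤ 1 := by
  cases h with
  | inl h =>
    have hY : FiniteDimensional F Y := (largeEmb_fin_iff F h).mp hX
    obtain ⟨h1, h2⟩ := largeEmb_finrank F h hX hY
    exact ⟨hY, by omega⟩
  | inr h =>
    have hY : FiniteDimensional F Y := (largeEmb_fin_iff F h).mpr hX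
    obtain ⟨h1, h2⟩ := largeEmb_finrank F h hY hX
    exact ⟨hY, by omega⟩

lemma hasPath_bound {V : ModuleCat.{0} F} (hV : FiniteDimensional F V) {n : ℕ} :
    ∀ {W : ModuleCat.{0} F}, HasPath F V W n →
      FiniteDimensional F W ∧ ((finrank F V : ℤ) - finrank F W).natAbs ≤ n := by
  induction n with
  | zero =>
    intro W h
    obtain ⟨C, ⟨e0⟩, ⟨en⟩, -⟩ := h
    have e : V ≃ₗ[F] W := e0.symm.trans en
    haveI := hV
    exact ⟨e.finiteDimensional, by rw [e.finrank_eq]; omega⟩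
  | succ n ih =>
    intro W h
    obtain ⟨C, hC0, ⟨en⟩, hstep⟩ := h
    obtain ⟨hfin, hle⟩ := ih (W := C n) ⟨C, hC0, ⟨LinearEquiv.refl F _⟩,
      fun i hi => hstep i (by omega)⟩
    obtain ⟨hfin', hle'⟩ := edge_fin F (hstep n (by omega)) hfin
    haveI := hfin'
    refine ⟨en.finiteDimensional, ?_⟩
    rw [← en.finrank_eq]
    omega

lemma edge_inf {X Y : ModuleCat.{0} F} (h : LargeEmb F X Y ∨ LargeEmb F Y X)
    (hX : ¬ FiniteDimensional F X) :
    ¬ FiniteDimensional F Y ∧ Module.rank F X = Module.rank F Y := by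
  rw [show (FiniteDimensional F X) = Module.Finite F X from rfl,
    ← Module.rank_lt_aleph0_iff, not_lt] at hX
  have key : ∀ {A B : ModuleCat.{0} F}, LargeEmb F A B → ℵ₀ ≤ Module.rank F A →
      Module.rank F A = Module.rank F B := by
    intro A B hAB hA
    obtain ⟨h1, h2⟩ := largeEmb_rank F hAB
    refine le_antisymm h1 (h2.trans ?_)
    rw [Cardinal.add_one_eq hA]
  have hrank : Module.rank F X = Module.rank F Y := by
    cases h with
    | inl h => exact key h hX
    | inr h =>
      obtain ⟨h1, h2⟩ := largeEmb_rank F h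
      have hBinf : ℵ₀ ≤ Module.rank F Y := by
        by_contra hc
        push_neg at hc
        exact absurd (hX.trans_lt (h2.trans_lt
          (Cardinal.add_lt_aleph0 hc Cardinal.one_lt_aleph0))) (lt_irrefl _)
      exact (key h hBinf).symm
  refine ⟨?_, hrank⟩
  rw [show (FiniteDimensional F Y) = Module.Finite F Y from rfl, ← Module.rank_lt_aleph0_iff,
    not_lt, ← hrank]
  exact hX

lemma hasPath_inf {V : ModuleCat.{0} F} (hV : ¬ FiniteDimensional F V) {n : ℕ} :
    ∀ {W : ModuleCat.{0} F}, HasPath F V W n → Nonempty (V ≃ₗ[F] W) := by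
  induction n with
  | zero =>
    intro W h
    obtain ⟨C, ⟨e0⟩, ⟨en⟩, -⟩ := h
    exact ⟨e0.symm.trans en⟩
  | succ n ih =>
    intro W h
    obtain ⟨C, hC0, ⟨en⟩, hstep⟩ := h
    obtain ⟨e⟩ := ih (W := C n) ⟨C, hC0, ⟨LinearEquiv.refl F _⟩, fun i hi => hstep i (by omega)⟩
    have hCn : ¬ FiniteDimensional F (C n) := fun hf => hV (e.symm.finiteDimensional)
    obtain ⟨-, hrank⟩ := edge_inf F (hstep n (by omega)) hCn
    have : Nonempty ((C n : Type) ≃ₗ[F] (C (n + 1) : Type)) :=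
      nonempty_linearEquiv_of_rank_eq hrank
    obtain ⟨e'⟩ := this
    exact ⟨(e.trans e').trans en⟩

end VecNetwork

open VecNetwork in
theorem dis_of_vector_spaces (F : Type) [Field F] (V W : ModuleCat.{0} F) :
    (Nonempty (V ≃ₗ[F] W) → dis F V W = 0) ∧
    (FiniteDimensional F V → FiniteDimensional F W →
      dis F V W = (((Module.finrank F V : ℤ) - (Module.finrank F W : ℤ)).natAbs : ℕ∞)) ∧
    (¬ Nonempty (V ≃ₗ[F] W) → ¬ (FiniteDimensional F V ∧ FiniteDimensional F W) →
      dis F V W = ⊤) := by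
  refine ⟨?_, ?_, ?_⟩
  · rintro ⟨e⟩
    have h0 : (0 : ℕ∞) ∈ {q : ℕ∞ | ∃ n : ℕ, q = (n : ℕ∞) ∧ HasPath F V W n} :=
      ⟨0, by simp, fun _ => V, ⟨LinearEquiv.refl F _⟩, ⟨e⟩, fun i hi => absurd hi (by omega)⟩
    exact le_antisymm (sInf_le h0) zero_le
  · intro hV hW
    have hmem : (((Module.finrank F V : ℤ) - Module.finrank F W).natAbs : ℕ∞) ∈
        {q : ℕ∞ | ∃ n : ℕ, q = (n : ℕ∞) ∧ HasPath F V W n} := by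
      refine ⟨((Module.finrank F V : ℤ) - Module.finrank F W).natAbs, rfl, ?_⟩
      rcases le_total (Module.finrank F V) (Module.finrank F W) with hab | hab
      · have h1 : ((Module.finrank F V : ℤ) - Module.finrank F W).natAbs =
            Module.finrank F W - Module.finrank F V := by omega
        rw [h1]
        exact hasPath_of_le F hV hW hab
      · have h1 : ((Module.finrank F V : ℤ) - Module.finrank F W).natAbs =
            Module.finrank F V - Module.finrank F W := by omega
        rw [h1]
        exact hasPath_symm F (hasPath_of_le F hW hV hab)
    refine le_antisymm (sInf_le hmem) (le_sInf ?_)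
    rintro q ⟨n, rfl, hp⟩
    exact_mod_cast (hasPath_bound F hV hp).2
  · intro hne hnf
    have hempty : {q : ℕ∞ | ∃ n : ℕ, q = (n : ℕ∞) ∧ HasPath F V W n} = ∅ := by
      ext q
      simp only [Set.mem_setOf_eq, Set.mem_empty_iff_false, iff_false, not_exists]
      rintro n ⟨-, hp⟩
      by_cases hV : FiniteDimensional F V
      · exact hnf ⟨hV, (hasPath_bound F hV hp).1⟩
      · exact hne (hasPath_inf F hV hp)
    rw [dis, hempty, sInf_empty]
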